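/- Every eigenvalue of the pinned Laplacian K has strictly positive real part; in particular, -K is Hurwitz. -/

import Mathlib

/-- Every eigenvalue of the pinned Laplacian `K` (diagonally dominant with nonpositive
off-diagonal entries, nonnegative row sums, and invertible) has strictly positive real
part; in particular `-K` is Hurwitz. -/
theorem stmt_1 (n : ℕ) (K : Matrix (Fin n) (Fin n) ℝ)
    (hoff : ∀ i k, k ≠ i → K i k ≤ 0)
    (hrow : ∀ i, 0 ≤ ∑ k, K i k)
    (hinv : IsUnit K.det)
    (μ : ℂ) (v : Fin n → ℂ) (hv : v ≠ 0)
    (heig : (K.map (Complex.ofReal)).mulVec v = μ • v) :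
    0 < μ.re := by
  set A : Matrix (Fin n) (Fin n) ℂ := K.map (Complex.ofReal)
  have hdet : A.det ≠ 0 := by
    have : A.det = (K.det : ℂ) := (RingHom.map_det Complex.ofRealHom K).symm
    rw [this]
    exact_mod_cast hinv.ne_zero
  have hμ0 : μ ≠ 0 := by
    intro h
    subst h
    have : ∃ w, w ≠ 0 ∧ A.mulVec w = 0 := ⟨v, hv, by simpa using heig⟩
    exact hdet (Matrix.exists_mulVec_eq_zero_iff.mp this)
  -- μ is an eigenvalue of toLin' A
  have hev : Module.End.HasEigenvalue (Matrix.toLin' A) μ := by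
    apply Module.End.hasEigenvalue_of_hasEigenvector (x := v)
    refine ⟨Module.End.mem_eigenspace_iff.mpr ?_, hv⟩
    rw [Matrix.toLin'_apply, heig]
  obtain ⟨i, hi⟩ := eigenvalue_mem_ball hev
  rw [Metric.mem_closedBall, dist_eq_norm] at hi
  have hAnorm : ∀ j, j ≠ i → ‖A i j‖ = -(K i j) := by
    intro j hj
    simp only [A, Matrix.map_apply, Complex.norm_real]
    exact abs_of_nonpos (hoff i j hj)
  have hR : (∑ j ∈ Finset.univ.erase i, ‖A i j‖) = ∑ j ∈ Finset.univ.erase i, -(K i j) := by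
    exact Finset.sum_congr rfl fun j hj => hAnorm j (Finset.ne_of_mem_erase hj)
  have hRd : (∑ j ∈ Finset.univ.erase i, -(K i j)) ≤ K i i := by
    have := hrow i
    rw [← Finset.add_sum_erase Finset.univ (fun k => K i k) (Finset.mem_univ i)] at this
    have : -(∑ j ∈ Finset.univ.erase i, K i j) ≤ K i i := by linarith
    simpa [Finset.sum_neg_distrib] using this
  have hR0 : 0 ≤ ∑ j ∈ Finset.univ.erase i, -(K i j) := by
    apply Finset.sum_nonneg
    intro j hj
    linarith [hoff i j (Finset.ne_of_mem_erase hj)]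
  set d : ℝ := K i i with hd
  have hd0 : 0 ≤ d := le_trans hR0 hRd
  have hAii : A i i = (d : ℂ) := rfl
  have hball : ‖μ - (d : ℂ)‖ ≤ d := by
    rw [hAii] at hi
    calc ‖μ - (d:ℂ)‖ ≤ _ := hi
      _ ≤ d := by rw [hR]; exact hRd
  have hsq : (μ.re - d)^2 + μ.im^2 ≤ d^2 := by
    have h2 : ‖μ - (d:ℂ)‖^2 ≤ d^2 := by
      apply pow_le_pow_left₀ (norm_nonneg _) hball
    rw [show ‖μ - (d:ℂ)‖^2 = Complex.normSq (μ - (d:ℂ)) from by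
      rw [Complex.sq_norm]] at h2
    simpa [Complex.normSq_apply, pow_two] using h2
  by_contra h
  push_neg at h
  have him : μ.im = 0 := by nlinarith
  have hre : μ.re = 0 := by nlinarith
  exact hμ0 (Complex.ext hre him)
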